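/- Let p and q be probability mass functions on a finite nonempty type 𝒳, and for a function D : 𝒳 → (0, 1) define V(D) := Σ_x p(x) · log(D(x)) + Σ_x q(x) · log(1 − D(x)) (natural logarithm). Let D* : 𝒳 → (0, 1) be any function satisfying D*(x) = p(x) / (p(x) + q(x)) for every x with p(x) + q(x) > 0. Then V(D) ≤ V(D*) for every D : 𝒳 → (0, 1). -/

import Mathlib

open Classical Finset Real

/-- `μ` is a probability mass function on the finite type `Ω`. -/
def IsPMF {Ω : Type*} [Fintype Ω] (μ : Ω → ℝ) : Prop :=
  (∀ ω, 0 ≤ μ ω) ∧ ∑ ω, μ ω = 1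

open Classical in
/-- Probability that the random variable `X` takes the value `a`, under `μ`. -/
noncomputable def pr {Ω α : Type*} [Fintype Ω] (μ : Ω → ℝ) (X : Ω → α) (a : α) : ℝ :=
  ∑ ω, if X ω = a then μ ω else 0

/-- Shannon entropy `H(X)` (natural logarithm). -/
noncomputable def ent {Ω α : Type*} [Fintype Ω] [Fintype α] (μ : Ω → ℝ) (X : Ω → α) : ℝ :=
  -∑ a, pr μ X a * Real.log (pr μ X a)

/-- Conditional entropy `H(X | Y) := H(X, Y) - H(Y)`. -/
noncomputable def condEnt {Ω α β : Type*} [Fintype Ω] [Fintype α] [Fintype β]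
    (μ : Ω → ℝ) (X : Ω → α) (Y : Ω → β) : ℝ :=
  ent μ (fun ω => (X ω, Y ω)) - ent μ Y

/-- Mutual information `I(X; Y) := H(X) + H(Y) - H(X, Y)`. -/
noncomputable def mi {Ω α β : Type*} [Fintype Ω] [Fintype α] [Fintype β]
    (μ : Ω → ℝ) (X : Ω → α) (Y : Ω → β) : ℝ :=
  ent μ X + ent μ Y - ent μ (fun ω => (X ω, Y ω))

/-- Conditional mutual information
`I(X; Y | Z) := H(X, Z) + H(Y, Z) - H(X, Y, Z) - H(Z)`. -/
noncomputable def condMI {Ω α β γ : Type*} [Fintype Ω] [Fintype α] [Fintype β] [Fintype γ]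
    (μ : Ω → ℝ) (X : Ω → α) (Y : Ω → β) (Z : Ω → γ) : ℝ :=
  ent μ (fun ω => (X ω, Z ω)) + ent μ (fun ω => (Y ω, Z ω))
    - ent μ (fun ω => ((X ω, Y ω), Z ω)) - ent μ Z

/-- Independence of the random variables `X` and `Y` under `μ`. -/
def IndepRV {Ω α β : Type*} [Fintype Ω] (μ : Ω → ℝ) (X : Ω → α) (Y : Ω → β) : Prop :=
  ∀ a b, pr μ (fun ω => (X ω, Y ω)) (a, b) = pr μ X a * pr μ Y b

/-- Kullback–Leibler divergence between pmfs on a finite type (natural logarithm). -/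
noncomputable def KL {α : Type*} [Fintype α] (p q : α → ℝ) : ℝ :=
  ∑ x, p x * Real.log (p x / q x)

/-- Jensen–Shannon divergence between pmfs on a finite type. -/
noncomputable def JSD {α : Type*} [Fintype α] (p q : α → ℝ) : ℝ :=
  (1 / 2) * KL p (fun x => (p x + q x) / 2) + (1 / 2) * KL q (fun x => (p x + q x) / 2)


lemma gan_key (a b D Ds : ℝ) (ha : 0 < a) (hb : 0 < b)
    (hD0 : 0 < D) (hD1 : D < 1) (hDs : Ds = a / (a + b)) :
    a * Real.log D + b * Real.log (1 - D) ≤ a * Real.log Ds + b * Real.log (1 - Ds) := by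
  have hs : 0 < a + b := by linarith
  have hDs0 : 0 < Ds := by rw [hDs]; positivity
  have h1Ds : 1 - Ds = b / (a + b) := by
    rw [hDs]; field_simp; ring
  have h1Ds0 : 0 < 1 - Ds := by rw [h1Ds]; positivity
  have hD1' : 0 < 1 - D := by linarith
  have l1 : Real.log D - Real.log Ds ≤ D / Ds - 1 := by
    have := Real.log_le_sub_one_of_pos (show 0 < D / Ds by positivity)
    rwa [Real.log_div hD0.ne' hDs0.ne'] at this
  have l2 : Real.log (1 - D) - Real.log (1 - Ds) ≤ (1 - D) / (1 - Ds) - 1 := by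
    have := Real.log_le_sub_one_of_pos (show 0 < (1 - D) / (1 - Ds) by positivity)
    rwa [Real.log_div hD1'.ne' h1Ds0.ne'] at this
  have e1 : a * (D / Ds - 1) = (a + b) * D - a := by
    rw [hDs]; field_simp
  have e2 : b * ((1 - D) / (1 - Ds) - 1) = (a + b) * (1 - D) - b := by
    rw [h1Ds]; field_simp
  nlinarith [mul_le_mul_of_nonneg_left l1 ha.le, mul_le_mul_of_nonneg_left l2 hb.le]

/-- Optimal GAN discriminator: for fixed distributions `p` (data) and `q`
(generator), the discriminator objective `V(D)` is maximized at
`D* = p / (p + q)`. -/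
theorem gan_optimal_discriminator {X : Type*} [Fintype X] [Nonempty X]
    (p q : X → ℝ) (hp : IsPMF p) (hq : IsPMF q)
    (Dstar : X → ℝ) (hDs0 : ∀ x, 0 < Dstar x) (hDs1 : ∀ x, Dstar x < 1)
    (hDstar : ∀ x, 0 < p x + q x → Dstar x = p x / (p x + q x)) :
    ∀ D : X → ℝ, (∀ x, 0 < D x) → (∀ x, D x < 1) →
      (∑ x, p x * Real.log (D x)) + (∑ x, q x * Real.log (1 - D x))
        ≤ (∑ x, p x * Real.log (Dstar x)) + (∑ x, q x * Real.log (1 - Dstar x)) := by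
  intro D hD0 hD1
  rw [← Finset.sum_add_distrib, ← Finset.sum_add_distrib]
  apply Finset.sum_le_sum
  intro x _
  by_cases h : 0 < p x + q x
  · have hpx : 0 < p x := by
      rcases (hp.1 x).lt_or_eq with h' | h'
      · exact h'
      · exfalso
        have := hDs0 x
        rw [hDstar x h, ← h'] at this
        simp at this
    have hqx : 0 < q x := by
      rcases (hq.1 x).lt_or_eq with h' | h'
      · exact h'
      · exfalso
        have := hDs1 x
        rw [hDstar x h, ← h'] at this
        rw [add_zero, div_self hpx.ne'] at this
        linarith
    exact gan_key (p x) (q x) (D x) (Dstar x) hpx hqx (hD0 x) (hD1 x) (hDstar x h)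
  · have hp0 : p x = 0 := le_antisymm (by linarith [hq.1 x]) (hp.1 x)
    have hq0 : q x = 0 := le_antisymm (by linarith [hp.1 x]) (hq.1 x)
    simp [hp0, hq0]
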